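/- Consider the ODE model: (1/N) Σⱼ (I + m Φ(Xⱼ,y)ᵀΦ(Xⱼ,y)) ÿ = (1/N) Σⱼ [F₀(y) + Φ(Xⱼ,y)ᵀ(F₁(Xⱼ) − m Ω(Xⱼ,y)[ẏ,ẏ])] and Ẋᵢ = Φ(Xᵢ,y) ẏ for 1 ≤ i ≤ N, where F₀ = −∇W₀, F₁ = −∇W₁ with W₀ ∈ C¹(ℝ^{n_y}), W₁ ∈ C¹(ℝ^{n_x}), Φ C¹, and Ω defined from Φ as Ω[v,w] = D_XΦ[v, Φw] + D_yΦ[v,w]. For any solution with y ∈ C²([0,T]) and each Xᵢ ∈ C¹([0,T]), the total energy E(t) = ½‖ẏ‖² + W₀(y) + (1/N) Σᵢ (½ m ‖Ẋᵢ‖² + W₁(Xᵢ)) is constant in t. -/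

import Mathlib

open Set
open scoped RealInnerProductSpace

abbrev Euc (n : ℕ) := EuclideanSpace ℝ (Fin n)

/-- conservation of the total energy
`E = ½‖ẏ‖² + W₀(y) + (1/N) Σᵢ (½ m ‖Ẋᵢ‖² + W₁(Xᵢ))` along solutions of the ODE model
`(1/N)Σⱼ(I + mΦⱼᵀΦⱼ) ÿ = (1/N)Σⱼ[F₀(y) + Φⱼᵀ(F₁(Xⱼ) − mΩⱼ[ẏ,ẏ])]`,
`Ẋᵢ = Φ(Xᵢ,y) ẏ`, with `F₀ = −∇W₀`, `F₁ = −∇W₁` and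
`Ω(X,y)[v,w] = D_XΦ[v,Φw] + D_yΦ[v,w] = (DΦ(X,y)(Φ(X,y)w, w)) v`. -/
theorem stmt_14 {nx ny N : ℕ} (hN : 0 < N)
    (m : ℝ) (hm : 0 < m)
    (W₀ : Euc ny → ℝ) (W₁ : Euc nx → ℝ)
    (F₀ : Euc ny → Euc ny) (F₁ : Euc nx → Euc nx)
    (hW₀ : ∀ y, HasGradientAt W₀ (-(F₀ y)) y)
    (hW₁ : ∀ X, HasGradientAt W₁ (-(F₁ X)) X)
    (Φ : Euc nx × Euc ny → (Euc ny →L[ℝ] Euc nx))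
    (DΦ : Euc nx × Euc ny → (Euc nx × Euc ny →L[ℝ] (Euc ny →L[ℝ] Euc nx)))
    (hΦ : ∀ p, HasFDerivAt Φ (DΦ p) p)
    (T : ℝ) (hT : 0 ≤ T)
    (X : Fin N → ℝ → Euc nx) (X' : Fin N → ℝ → Euc nx)
    (y : ℝ → Euc ny) (y' y'' : ℝ → Euc ny)
    (hX : ∀ i, ∀ t ∈ Icc 0 T, HasDerivAt (X i) (X' i t) t)
    (hy : ∀ t ∈ Icc 0 T, HasDerivAt y (y' t) t)
    (hy' : ∀ t ∈ Icc 0 T, HasDerivAt y' (y'' t) t)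
    (hconstr : ∀ i, ∀ t ∈ Icc 0 T, X' i t = Φ (X i t, y t) (y' t))
    (hODE : ∀ t ∈ Icc 0 T,
      y'' t + ((m / N : ℝ) • ∑ j : Fin N,
          (ContinuousLinearMap.adjoint (Φ (X j t, y t)))
            (Φ (X j t, y t) (y'' t))) =
        F₀ (y t) + ((N : ℝ)⁻¹ • ∑ j : Fin N,
          (ContinuousLinearMap.adjoint (Φ (X j t, y t)))
            (F₁ (X j t) - m • (DΦ (X j t, y t)
              (Φ (X j t, y t) (y' t), y' t)) (y' t)))) :
    let E : ℝ → ℝ := fun t =>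
      (1 / 2 : ℝ) * ‖y' t‖ ^ 2 + W₀ (y t) +
        (N : ℝ)⁻¹ * ∑ i : Fin N, (m / 2 * ‖X' i t‖ ^ 2 + W₁ (X i t))
    ∀ t ∈ Icc 0 T, E t = E 0 := by
  intro E
  have hNne : (N : ℝ) ≠ 0 := Nat.cast_ne_zero.mpr hN.ne'
  set g : Fin N → ℝ → Euc nx := fun i t => Φ (X i t, y t) (y' t) with hgdef
  set G : ℝ → ℝ := fun t =>
      (1 / 2 : ℝ) * ‖y' t‖ ^ 2 + W₀ (y t) +
        (N : ℝ)⁻¹ * ∑ i : Fin N, (m / 2 * ‖g i t‖ ^ 2 + W₁ (X i t)) with hGdef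
  have hEG : ∀ t ∈ Icc 0 T, E t = G t := by
    intro t ht
    simp only [E, G]
    congr 2
    refine Finset.sum_congr rfl fun i _ => ?_
    rw [hconstr i t ht]
  -- `G` has derivative 0 on `Icc 0 T`
  have key : ∀ t ∈ Icc 0 T, HasDerivAt G 0 t := by
    intro t ht
    have hyt := hy t ht
    have hy't := hy' t ht
    -- derivative of ½‖y'‖²
    have h1 : HasDerivAt (fun s => (1 / 2 : ℝ) * ‖y' s‖ ^ 2)
        (⟪y'' t, y' t⟫) t := by
      have h := ((hy't.inner ℝ hy't)).const_mul (1 / 2 : ℝ)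
      simp only [real_inner_self_eq_norm_sq] at h
      refine h.congr_deriv ?_
      rw [real_inner_comm (y' t) (y'' t)]
      ring
    -- derivative of W₀ ∘ y
    have h2 : HasDerivAt (fun s => W₀ (y s)) (⟪-(F₀ (y t)), y' t⟫) t := by
      have h := (hW₀ (y t)).hasFDerivAt.comp_hasDerivAt t hyt
      exact h.congr_deriv (by simp [InnerProductSpace.toDual_apply_apply])
    -- derivatives of g i and the particle terms
    have hgder : ∀ i, HasDerivAt (g i)
        ((DΦ (X i t, y t) (X' i t, y' t)) (y' t) + Φ (X i t, y t) (y'' t)) t := by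
      intro i
      have hp : HasDerivAt (fun s => (X i s, y s)) (X' i t, y' t) t :=
        (hX i t ht).prodMk hyt
      have hc : HasDerivAt (fun s => Φ (X i s, y s))
          (DΦ (X i t, y t) (X' i t, y' t)) t :=
        (hΦ (X i t, y t)).comp_hasDerivAt t hp
      exact hc.clm_apply hy't
    have h3 : ∀ i, HasDerivAt (fun s => m / 2 * ‖g i s‖ ^ 2 + W₁ (X i s))
        (m * ⟪(DΦ (X i t, y t) (X' i t, y' t)) (y' t) + Φ (X i t, y t) (y'' t), g i t⟫
          + ⟪-(F₁ (X i t)), X' i t⟫) t := by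
      intro i
      have hsq : HasDerivAt (fun s => m / 2 * ‖g i s‖ ^ 2)
          (m * ⟪(DΦ (X i t, y t) (X' i t, y' t)) (y' t) + Φ (X i t, y t) (y'' t), g i t⟫) t := by
        have h := (((hgder i).inner ℝ (hgder i))).const_mul (m / 2 : ℝ)
        simp only [real_inner_self_eq_norm_sq] at h
        refine h.congr_deriv ?_
        rw [real_inner_comm (g i t)]
        ring
      have hw : HasDerivAt (fun s => W₁ (X i s)) (⟪-(F₁ (X i t)), X' i t⟫) t := by
        have h := (hW₁ (X i t)).hasFDerivAt.comp_hasDerivAt t (hX i t ht)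
        exact h.congr_deriv (by simp [InnerProductSpace.toDual_apply_apply])
      exact hsq.add hw
    have hsum : HasDerivAt (fun s => (N : ℝ)⁻¹ * ∑ i : Fin N,
        (m / 2 * ‖g i s‖ ^ 2 + W₁ (X i s)))
        ((N : ℝ)⁻¹ * ∑ i : Fin N,
          (m * ⟪(DΦ (X i t, y t) (X' i t, y' t)) (y' t) + Φ (X i t, y t) (y'' t), g i t⟫
            + ⟪-(F₁ (X i t)), X' i t⟫)) t :=
      (HasDerivAt.fun_sum fun i _ => h3 i).const_mul _
    have htot := (h1.add h2).add hsum
    -- now show the total derivative is zero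
    refine htot.congr_deriv (Eq.symm ?_)
    symm
    have hode := hODE t ht
    have hzero : (y'' t + ((m / N : ℝ) • ∑ j : Fin N,
          (ContinuousLinearMap.adjoint (Φ (X j t, y t))) (Φ (X j t, y t) (y'' t)))) -
        (F₀ (y t) + ((N : ℝ)⁻¹ • ∑ j : Fin N,
          (ContinuousLinearMap.adjoint (Φ (X j t, y t)))
            (F₁ (X j t) - m • (DΦ (X j t, y t)
              (Φ (X j t, y t) (y' t), y' t)) (y' t)))) = 0 := by
      rw [hode]; exact sub_self _
    have hinner := congrArg (fun v => ⟪v, y' t⟫) hzero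
    simp only [inner_zero_left] at hinner
    rw [← hinner]
    have hcon : ∀ i, X' i t = Φ (X i t, y t) (y' t) := fun i => hconstr i t ht
    simp only [hcon, hgdef]
    simp only [inner_sub_left, inner_add_left, real_inner_smul_left, sum_inner,
      ContinuousLinearMap.adjoint_inner_left, inner_sub_left, real_inner_smul_left,
      inner_neg_left]
    set P : Fin N → ℝ := fun i => ⟪(Φ (X i t, y t)) (y'' t), (Φ (X i t, y t)) (y' t)⟫ with hP
    set Q : Fin N → ℝ := fun i =>
      ⟪((DΦ (X i t, y t)) ((Φ (X i t, y t)) (y' t), y' t)) (y' t),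
        (Φ (X i t, y t)) (y' t)⟫ with hQ
    set R : Fin N → ℝ := fun i => ⟪F₁ (X i t), (Φ (X i t, y t)) (y' t)⟫ with hR
    rw [Finset.mul_sum, Finset.mul_sum, Finset.mul_sum]
    have hterm : ∀ i : Fin N, ((N : ℝ))⁻¹ * (m * (Q i + P i) + -(R i)) =
        m / (N : ℝ) * P i - ((N : ℝ))⁻¹ * (R i - m * Q i) := by
      intro i; field_simp; ring
    rw [Finset.sum_congr rfl fun i _ => hterm i, Finset.sum_sub_distrib]
    ring
  -- conclude via the mean value theorem
  have hG0 : ∀ t ∈ Icc 0 T, G t = G 0 := by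
    intro t ht
    refine constant_of_has_deriv_right_zero (f := G) (a := 0) (b := T)
      (fun s hs => (key s hs).continuousAt.continuousWithinAt)
      (fun s hs => ((key s ⟨hs.1, hs.2.le⟩).hasDerivWithinAt)) t ht
  intro t ht
  rw [hEG t ht, hEG 0 ⟨le_refl 0, hT⟩, hG0 t ht]
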